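/- Let a, b, c be nonnegative integers with a+b+c even and |a−b| ≤ c ≤ a+b. Set σ := (a+b+c)/2, x := (−a+b+c)/2, y := (a−b+c)/2, w := (a+b−c)/2, and let T ∈ ℤ[v,v⁻¹] be the Laurent polynomial with T·[x]!·[y]!·[w]! = [σ]!. Define the colored theta graph evaluation ⟨Θ a,b,c⟩ := (−1)^σ [σ+1]·T. Then d₊⟨Θ a,b,c⟩ = a(1−a) + b(1−b) + c(1−c) + (a+b+c)²/2, and the coefficient of this top-degree term is ±1. -/

import Mathlib

open LaurentPolynomial

/-- The balanced quantum integer `[k]` in `ℤ[v,v⁻¹]`. -/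
noncomputable def qint (k : ℕ) : LaurentPolynomial ℤ :=
  ∑ i ∈ Finset.range k, LaurentPolynomial.T (2 * ((k : ℤ) - 1) - 4 * (i : ℤ))

/-- The balanced quantum factorial `[k]! = [1][2]⋯[k]`, with `[0]! = 1`. -/
noncomputable def qfact (k : ℕ) : LaurentPolynomial ℤ :=
  ∏ i ∈ Finset.range k, qint (i + 1)

/-- `f` has top degree `d` with coefficient `±1`. -/
def LTop (f : LaurentPolynomial ℤ) (d : ℤ) : Prop :=
  (f.coeff d = 1 ∨ f.coeff d = -1) ∧ ∀ n, d < n → f.coeff n = 0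

lemma LTop.ne_zero {f : LaurentPolynomial ℤ} {d : ℤ} (h : LTop f d) : f.coeff d ≠ 0 := by
  rcases h.1 with h1 | h1 <;> rw [h1] <;> decide

lemma mul_apply_top {f g : LaurentPolynomial ℤ} {d e : ℤ}
    (hf : ∀ n, d < n → f.coeff n = 0) (hg : ∀ n, e < n → g.coeff n = 0) :
    (f * g).coeff (d + e) = f.coeff d * g.coeff e := by
  rw [AddMonoidAlgebra.coeff_mul]
  rw [Finsupp.sum, Finset.sum_eq_single d]
  · rw [Finsupp.sum, Finset.sum_eq_single e]
    · simp
    · intro b _ hbe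
      rw [if_neg]
      omega
    · intro hb
      rw [if_pos rfl, Finsupp.notMem_support_iff.mp hb, mul_zero]
  · intro b hb hbd
    rw [Finsupp.sum]
    apply Finset.sum_eq_zero
    intro c hc
    rcases lt_or_ge d b with hlt | hle
    · rw [Finsupp.mem_support_iff] at hb
      exact absurd (hf b hlt) hb
    · split_ifs with he
      · have : e < c := by omega
        rw [hg c this, mul_zero]
      · rfl
  · intro hd
    rw [Finsupp.sum]
    apply Finset.sum_eq_zero
    intro c _
    split_ifs
    · rw [Finsupp.notMem_support_iff.mp hd, zero_mul]
    · rfl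

lemma mul_apply_high {f g : LaurentPolynomial ℤ} {d e : ℤ}
    (hf : ∀ n, d < n → f.coeff n = 0) (hg : ∀ n, e < n → g.coeff n = 0) :
    ∀ n, d + e < n → (f * g).coeff n = 0 := by
  intro n hn
  rw [AddMonoidAlgebra.coeff_mul]
  rw [Finsupp.sum]
  apply Finset.sum_eq_zero
  intro a _
  rw [Finsupp.sum]
  apply Finset.sum_eq_zero
  intro b _
  split_ifs with hab
  · rcases lt_or_ge d a with hlt | hle
    · rw [hf a hlt, zero_mul]
    · rw [hg b (by omega), mul_zero]
  · rfl

lemma LTop.mul {f g : LaurentPolynomial ℤ} {d e : ℤ} (hf : LTop f d) (hg : LTop g e) :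
    LTop (f * g) (d + e) := by
  refine ⟨?_, mul_apply_high hf.2 hg.2⟩
  rw [mul_apply_top hf.2 hg.2]
  rcases hf.1 with h1 | h1 <;> rcases hg.1 with h2 | h2 <;> rw [h1, h2] <;> norm_num

/-- cancellation: if `g` and `f * g` have top terms, so does `f`. -/
lemma LTop.cancel {f g : LaurentPolynomial ℤ} {e m : ℤ} (hg : LTop g e)
    (hfg : LTop (f * g) m) : LTop f (m - e) := by
  have hf0 : f ≠ 0 := by
    rintro rfl
    rw [zero_mul] at hfg
    exact hfg.ne_zero rfl
  -- f has a maximal support element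
  obtain ⟨d, hd⟩ := Finset.max_of_nonempty (Finsupp.support_nonempty_iff.mpr (mt AddMonoidAlgebra.coeff_eq_zero.mp hf0))
  have hdmem : d ∈ f.coeff.support := Finset.mem_of_max hd
  have hdtop : ∀ n, d < n → f.coeff n = 0 := by
    intro n hn
    by_contra h
    have := Finset.le_max (Finsupp.mem_support_iff.mpr h)
    rw [hd] at this
    exact absurd (WithBot.coe_le_coe.mp this) (by omega)
  have hval : (f * g).coeff (d + e) = f.coeff d * g.coeff e := mul_apply_top hdtop hg.2
  have hne : (f * g).coeff (d + e) ≠ 0 := by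
    rw [hval]
    exact mul_ne_zero (Finsupp.mem_support_iff.mp hdmem) hg.ne_zero
  -- conclude d + e = m
  have h1 : d + e ≤ m := by
    by_contra h
    exact hne (hfg.2 _ (by omega))
  have h2 : m ≤ d + e := by
    by_contra h
    exact hfg.ne_zero (mul_apply_high hdtop hg.2 _ (by omega))
  have hde : d = m - e := by omega
  subst hde
  refine ⟨?_, hdtop⟩
  rcases hg.1 with h3 | h3 <;> rcases hfg.1 with h4 | h4 <;>
    [left; right; right; left] <;>
  · have := hval
    rw [show m - e + e = m by ring, h4, h3] at this
    omega

lemma lTop_qint (k : ℕ) (hk : 0 < k) : LTop (qint k) (2 * (k : ℤ) - 2) := by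
  have happ : ∀ n : ℤ, (qint k).coeff n =
      ∑ i ∈ Finset.range k, if 2 * ((k : ℤ) - 1) - 4 * (i : ℤ) = n then (1 : ℤ) else 0 := by
    intro n
    rw [qint]
    rw [AddMonoidAlgebra.coeff_sum, Finsupp.finset_sum_apply]
    refine Finset.sum_congr rfl fun i _ => ?_
    rw [LaurentPolynomial.T, AddMonoidAlgebra.coeff_single]
    exact Finsupp.single_apply
  constructor
  · left
    rw [happ, Finset.sum_eq_single 0]
    · rw [if_pos (by push_cast; ring)]
    · intro i hi h0
      rw [if_neg]
      have : 1 ≤ (i : ℤ) := by exact_mod_cast Nat.one_le_iff_ne_zero.mpr h0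
      omega
    · intro h
      exact absurd (Finset.mem_range.mpr hk) h
  · intro n hn
    rw [happ]
    apply Finset.sum_eq_zero
    intro i _
    rw [if_neg]
    have : (0 : ℤ) ≤ (i : ℤ) := Int.natCast_nonneg i
    omega

lemma lTop_qfact (k : ℕ) : LTop (qfact k) ((k : ℤ) * ((k : ℤ) - 1)) := by
  induction k with
  | zero =>
    simp only [qfact, Finset.range_zero, Finset.prod_empty, Nat.cast_zero]
    constructor
    · left
      rw [AddMonoidAlgebra.one_def, AddMonoidAlgebra.coeff_single]
      exact Finsupp.single_eq_same
    · intro n hn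
      rw [AddMonoidAlgebra.one_def, AddMonoidAlgebra.coeff_single]
      rw [Finsupp.single_apply, if_neg (by omega)]
  | succ k ih =>
    have h : qfact (k + 1) = qfact k * qint (k + 1) := by
      rw [qfact, qfact, Finset.prod_range_succ]
    rw [h]
    have := ih.mul (lTop_qint (k + 1) (Nat.succ_pos k))
    convert this using 1
    push_cast
    ring

theorem theta_degree (a b c : ℕ) (hparity : Even (a + b + c))
    (htri1 : c ≤ a + b) (htri2 : a ≤ b + c) (htri3 : b ≤ a + c)
    (T : LaurentPolynomial ℤ)
    (hT : T * qfact ((b + c - a) / 2) * qfact ((a + c - b) / 2) * qfact ((a + b - c) / 2)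
        = qfact ((a + b + c) / 2))
    (Θ : LaurentPolynomial ℤ)
    (hΘ : Θ = (-1) ^ ((a + b + c) / 2) * qint ((a + b + c) / 2 + 1) * T)
    (D : ℤ)
    (hD : D = (a : ℤ) * (1 - a) + (b : ℤ) * (1 - b) + (c : ℤ) * (1 - c)
        + ((a : ℤ) + b + c) ^ 2 / 2) :
    Θ.coeff.support.max = (D : WithBot ℤ) ∧ (Θ.coeff D = 1 ∨ Θ.coeff D = -1) := by
  obtain ⟨k, hk⟩ := hparity
  set s : ℕ := (a + b + c) / 2 with hs
  set x : ℕ := (b + c - a) / 2 with hx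
  set y : ℕ := (a + c - b) / 2 with hy
  set w : ℕ := (a + b - c) / 2 with hw
  have h2s : a + b + c = 2 * s := by omega
  have h2x : b + c = a + 2 * x := by omega
  have h2y : a + c = b + 2 * y := by omega
  have h2w : a + b = c + 2 * w := by omega
  -- top structure of T
  have hS : LTop (qfact s) ((s : ℤ) * ((s : ℤ) - 1)) := lTop_qfact s
  have hX : LTop (qfact x) ((x : ℤ) * ((x : ℤ) - 1)) := lTop_qfact x
  have hY : LTop (qfact y) ((y : ℤ) * ((y : ℤ) - 1)) := lTop_qfact y
  have hW : LTop (qfact w) ((w : ℤ) * ((w : ℤ) - 1)) := lTop_qfact w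
  have hprod : LTop (T * qfact x * qfact y * qfact w) ((s : ℤ) * ((s : ℤ) - 1)) := by
    rw [hT]; exact hS
  have hTW : LTop (T * qfact x * qfact y)
      ((s : ℤ) * ((s : ℤ) - 1) - (w : ℤ) * ((w : ℤ) - 1)) := hW.cancel hprod
  have hTY : LTop (T * qfact x)
      ((s : ℤ) * ((s : ℤ) - 1) - (w : ℤ) * ((w : ℤ) - 1) - (y : ℤ) * ((y : ℤ) - 1)) :=
    hY.cancel hTW
  have hTtop : LTop T
      ((s : ℤ) * ((s : ℤ) - 1) - (w : ℤ) * ((w : ℤ) - 1) - (y : ℤ) * ((y : ℤ) - 1)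
        - (x : ℤ) * ((x : ℤ) - 1)) := hX.cancel hTY
  have hQ : LTop (qint (s + 1)) (2 * (s : ℤ)) := by
    have := lTop_qint (s + 1) (Nat.succ_pos s)
    convert this using 1
    push_cast
    ring
  have hQT : LTop (qint (s + 1) * T)
      (2 * (s : ℤ) + ((s : ℤ) * ((s : ℤ) - 1) - (w : ℤ) * ((w : ℤ) - 1)
        - (y : ℤ) * ((y : ℤ) - 1) - (x : ℤ) * ((x : ℤ) - 1))) := hQ.mul hTtop
  -- the degree computation
  have hDeq : D = 2 * (s : ℤ) + ((s : ℤ) * ((s : ℤ) - 1) - (w : ℤ) * ((w : ℤ) - 1)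
      - (y : ℤ) * ((y : ℤ) - 1) - (x : ℤ) * ((x : ℤ) - 1)) := by
    have ha : (a : ℤ) = (s : ℤ) - (x : ℤ) := by
      have := h2x; have := h2s; push_cast at *; omega
    have hb : (b : ℤ) = (s : ℤ) - (y : ℤ) := by
      have := h2y; have := h2s; push_cast at *; omega
    have hc : (c : ℤ) = (s : ℤ) - (w : ℤ) := by
      have := h2w; have := h2s; push_cast at *; omega
    have hsxyw : (s : ℤ) = (x : ℤ) + (y : ℤ) + (w : ℤ) := by
      have := h2x; have := h2y; have := h2w; have := h2s; push_cast at *; omega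
    have habc : (a : ℤ) + (b : ℤ) + (c : ℤ) = 2 * (s : ℤ) := by
      have := h2s; push_cast at *; omega
    have hdiv : ((a : ℤ) + b + c) ^ 2 / 2 = 2 * (s : ℤ) ^ 2 := by
      rw [habc]
      have : (2 * (s : ℤ)) ^ 2 = 2 * (2 * (s : ℤ) ^ 2) := by ring
      rw [this, Int.mul_ediv_cancel_left _ (by norm_num)]
    rw [hD, hdiv, ha, hb, hc, hsxyw]
    ring
  have hΘtop : LTop Θ D := by
    rw [hΘ, hDeq]
    rcases Nat.even_or_odd s with he | ho
    · rw [he.neg_one_pow, one_mul]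
      exact hQT
    · rw [ho.neg_one_pow, neg_one_mul, neg_mul]
      refine ⟨?_, fun n hn => ?_⟩
      · rcases hQT.1 with h1 | h1
        · right; rw [AddMonoidAlgebra.coeff_neg, Finsupp.neg_apply, h1]
        · left; rw [AddMonoidAlgebra.coeff_neg, Finsupp.neg_apply, h1]; ring
      · rw [AddMonoidAlgebra.coeff_neg, Finsupp.neg_apply, hQT.2 n hn, neg_zero]
  refine ⟨?_, hΘtop.1⟩
  apply le_antisymm
  · apply Finset.max_le
    intro n hn
    rw [WithBot.coe_le_coe]
    by_contra h
    exact Finsupp.mem_support_iff.mp hn (hΘtop.2 n (by omega))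
  · exact Finset.le_max (Finsupp.mem_support_iff.mpr hΘtop.ne_zero)
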